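/- arXiv:2003.09239 — 2 statements merged into one kernel-verified Lean document; each statement's English description precedes it below -/
import Mathlib

section
/- Let σ > 0, s ≥ 0 and q ≥ 1. Then there exists a constant C = C(σ,s,q) > 0 such that for all t > 0: e^{−t/2} ‖ |ξ|^s L_σ(t,ξ) ‖_{L^q(\{|ξ| < 2^{−2/σ}\})} ≤ C ‖ |ξ|^s e^{−t|ξ|^σ} ‖_{L^q(\{|ξ| < 2^{−2/σ}\})}; moreover this quantity is bounded by C ‖ |ξ|^s ‖_{L^q(\{|ξ| < 2^{−2/σ}\})} if t ≤ 1 and by C t^{−s/σ − n/(σq)} ‖ |ξ|^s e^{−|ξ|^σ} ‖_{L^q(ℝⁿ)} if t ≥ 1. -/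
open MeasureTheory Real Filter
open scoped ENNReal

noncomputable section

abbrev Rn (n : ℕ) := EuclideanSpace ℝ (Fin n)

/-- The multiplier `L_σ(t,ξ)` (on the low-frequency region `|ξ| < 2^{-2/σ}` it is
`sinh(t√(1/4-|ξ|^σ))/√(1/4-|ξ|^σ)`). -/
def Lsig {n : ℕ} (σ t : ℝ) (ξ : Rn n) : ℝ :=
  if ‖ξ‖ < (2:ℝ) ^ (-(2/σ)) then
    Real.sinh (t * Real.sqrt (1/4 - ‖ξ‖ ^ σ)) / Real.sqrt (1/4 - ‖ξ‖ ^ σ)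
  else
    Real.sin (t * Real.sqrt (‖ξ‖ ^ σ - 1/4)) / Real.sqrt (‖ξ‖ ^ σ - 1/4)

/-- Low frequency region `{|ξ| < 2^{-2/σ}}`. -/
def lowFreq (n : ℕ) (σ : ℝ) : Set (Rn n) := {ξ : Rn n | ‖ξ‖ < (2:ℝ) ^ (-(2/σ))}

/-! ### Auxiliary elementary inequalities -/

lemma aux_sinh_le_self_mul_exp {x : ℝ} (hx : 0 ≤ x) : Real.sinh x ≤ x * Real.exp x := by
  rw [Real.sinh_eq]
  have h1 : 1 + (-(2*x)) ≤ Real.exp (-(2*x)) := by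
    linarith [Real.add_one_le_exp (-(2*x))]
  have h2 : Real.exp (-x) = Real.exp x * Real.exp (-(2*x)) := by
    rw [← Real.exp_add]; ring_nf
  have h3 : 1 ≤ Real.exp x := Real.one_le_exp hx
  nlinarith [Real.exp_pos (-(2*x)), Real.exp_pos x]

lemma aux_sinh_le_half_exp {x : ℝ} : Real.sinh x ≤ Real.exp x / 2 := by
  rw [Real.sinh_eq]
  have := Real.exp_pos (-x)
  linarith

lemma aux_self_le_exp_div {t : ℝ} (ht : 0 < t) : t ≤ 6 * Real.exp (t / 16) := by
  have h := Real.add_one_le_exp (t/16 - 1)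
  have h2 : Real.exp (t/16) = Real.exp 1 * Real.exp (t/16 - 1) := by
    rw [← Real.exp_add]; ring_nf
  have he : (2.7182818283 : ℝ) < Real.exp 1 := Real.exp_one_gt_d9
  nlinarith [Real.exp_pos (t/16 - 1)]

/-- The key pointwise estimate:
`e^{-t/2} sinh(t√(1/4-r))/√(1/4-r) ≤ 6 e^{-tr}` for `0 ≤ r < 1/4`. -/
lemma key_pointwise {t r : ℝ} (ht : 0 < t) (hr0 : 0 ≤ r) (hr : r < 1/4) :
    Real.exp (-(t/2)) * (Real.sinh (t * Real.sqrt (1/4 - r)) / Real.sqrt (1/4 - r))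
      ≤ 6 * Real.exp (-(t*r)) := by
  set m := Real.sqrt (1/4 - r) with hm
  have hmpos : 0 < m := Real.sqrt_pos.2 (by linarith)
  have hmsq : m^2 = 1/4 - r := Real.sq_sqrt (by linarith)
  have hmle : m ≤ 1/2 := by nlinarith
  have htm : 0 ≤ t * m := by positivity
  rcases le_or_gt (1/4 : ℝ) m with hc | hc
  · -- m ≥ 1/4 : use sinh ≤ exp/2, 1/m ≤ 4
    have h1 : Real.sinh (t*m) / m ≤ 2 * Real.exp (t*m) := by
      rw [div_le_iff₀ hmpos]
      calc Real.sinh (t*m) ≤ Real.exp (t*m) / 2 := aux_sinh_le_half_exp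
        _ ≤ 2 * Real.exp (t*m) * m := by nlinarith [Real.exp_pos (t*m)]
    have h2 : Real.exp (-(t/2)) * (2 * Real.exp (t*m)) ≤ 2 * Real.exp (-(t*r)) := by
      rw [show Real.exp (-(t/2)) * (2 * Real.exp (t*m)) = 2 * Real.exp (t*m - t/2) by
        rw [show t*m - t/2 = -(t/2) + t*m by ring, Real.exp_add]; ring]
      have : t*m - t/2 ≤ -(t*r) := by
        nlinarith [mul_nonneg ht.le (sq_nonneg (m - 1/2))]
      have := Real.exp_le_exp.2 this
      linarith
    have hL : Real.exp (-(t/2)) * (Real.sinh (t*m) / m)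
        ≤ Real.exp (-(t/2)) * (2 * Real.exp (t*m)) :=
      mul_le_mul_of_nonneg_left h1 (Real.exp_pos _).le
    have : (2:ℝ) * Real.exp (-(t*r)) ≤ 6 * Real.exp (-(t*r)) := by
      nlinarith [Real.exp_pos (-(t*r))]
    linarith
  · -- m < 1/4 : use sinh x ≤ x exp x
    have h1 : Real.sinh (t*m) / m ≤ t * Real.exp (t*m) := by
      rw [div_le_iff₀ hmpos]
      calc Real.sinh (t*m) ≤ (t*m) * Real.exp (t*m) := aux_sinh_le_self_mul_exp htm
        _ = t * Real.exp (t*m) * m := by ring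
    have hL : Real.exp (-(t/2)) * (Real.sinh (t*m) / m)
        ≤ t * Real.exp (t*m - t/2) := by
      have := mul_le_mul_of_nonneg_left h1 (Real.exp_pos (-(t/2))).le
      rw [show Real.exp (-(t/2)) * (t * Real.exp (t*m)) = t * Real.exp (t*m - t/2) by
        rw [show t*m - t/2 = -(t/2) + t*m by ring, Real.exp_add]; ring] at this
      exact this
    have hsq : (1:ℝ)/16 ≤ (m - 1/2)^2 := by nlinarith
    have hexp : t*m - t/2 ≤ -(t*r) - t/16 := by
      nlinarith [mul_le_mul_of_nonneg_left hsq ht.le]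
    have h2 : t * Real.exp (t*m - t/2) ≤ t * Real.exp (-(t*r) - t/16) :=
      mul_le_mul_of_nonneg_left (Real.exp_le_exp.2 hexp) ht.le
    have h3 : t * Real.exp (-(t*r) - t/16) ≤ 6 * Real.exp (-(t*r)) := by
      rw [show Real.exp (-(t*r) - t/16) = Real.exp (-(t*r)) / Real.exp (t/16) by
        rw [Real.exp_sub]]
      rw [mul_div_assoc', div_le_iff₀ (Real.exp_pos _)]
      have h4 := aux_self_le_exp_div ht
      nlinarith [Real.exp_pos (-(t*r)), Real.exp_pos (t/16)]
    linarith

/-! ### Auxiliary measure-theoretic lemmas -/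

lemma rpow_lt_quarter {σ : ℝ} (hσ : 0 < σ) {x : ℝ} (hx0 : 0 ≤ x)
    (hx : x < (2:ℝ)^(-(2/σ))) : x ^ σ < 1/4 := by
  have h := Real.rpow_lt_rpow hx0 hx hσ
  rwa [← Real.rpow_mul (by norm_num : (0:ℝ) ≤ 2),
    show -(2/σ) * σ = (-2 : ℝ) by field_simp,
    show (2:ℝ) ^ (-2 : ℝ) = 1/4 by
      rw [show (-2:ℝ) = ((-2:ℤ):ℝ) by norm_num, Real.rpow_intCast]; norm_num] at h

lemma lowFreq_measurableSet (n : ℕ) (σ : ℝ) : MeasurableSet (lowFreq n σ) :=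
  (isOpen_lt continuous_norm continuous_const).measurableSet

lemma ofReal_mul_eLpNorm {α : Type*} [MeasurableSpace α] (μ : Measure α) (p : ℝ≥0∞)
    {c : ℝ} (hc : 0 ≤ c) (f : α → ℝ) :
    ENNReal.ofReal c * eLpNorm f p μ = eLpNorm (fun x => c * f x) p μ := by
  rw [show (fun x => c * f x) = c • f from rfl, eLpNorm_const_smul, enorm_eq_ofReal hc]

/-- The basic comparison: `e^{-t/2}‖|ξ|^s L_σ‖_{L^q(low)} ≤ 6‖|ξ|^s e^{-t|ξ|^σ}‖_{L^q(low)}`. -/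
lemma step1 (n : ℕ) {σ : ℝ} (hσ : 0 < σ) (s : ℝ) (p : ℝ≥0∞)
    {t : ℝ} (ht : 0 < t) :
    ENNReal.ofReal (Real.exp (-(t/2))) *
        eLpNorm (fun ξ : Rn n => ‖ξ‖ ^ s * Lsig σ t ξ) p (volume.restrict (lowFreq n σ)) ≤
      ENNReal.ofReal 6 *
        eLpNorm (fun ξ : Rn n => ‖ξ‖ ^ s * Real.exp (-t * ‖ξ‖ ^ σ)) p
          (volume.restrict (lowFreq n σ)) := by
  rw [ofReal_mul_eLpNorm _ _ (Real.exp_pos _).le, ofReal_mul_eLpNorm _ _ (by norm_num : (0:ℝ) ≤ 6)]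
  refine eLpNorm_mono_ae ?_
  filter_upwards [ae_restrict_mem (lowFreq_measurableSet n σ)] with ξ hξ
  have hξ' : ‖ξ‖ < (2:ℝ) ^ (-(2/σ)) := hξ
  have hr : ‖ξ‖ ^ σ < 1/4 := rpow_lt_quarter hσ (norm_nonneg ξ) hξ'
  have hr0 : 0 ≤ ‖ξ‖ ^ σ := Real.rpow_nonneg (norm_nonneg ξ) σ
  have hLs : Lsig σ t ξ
      = Real.sinh (t * Real.sqrt (1/4 - ‖ξ‖^σ)) / Real.sqrt (1/4 - ‖ξ‖^σ) := by
    unfold Lsig; rw [if_pos hξ']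
  have hLpos : 0 ≤ Lsig σ t ξ := by
    rw [hLs]
    exact div_nonneg (Real.sinh_nonneg_iff.2 (by positivity)) (Real.sqrt_nonneg _)
  have ha : (0:ℝ) ≤ ‖ξ‖ ^ s := Real.rpow_nonneg (norm_nonneg ξ) s
  have key := key_pointwise ht hr0 hr
  rw [Real.norm_eq_abs, Real.norm_eq_abs,
    abs_of_nonneg (by positivity : (0:ℝ) ≤ Real.exp (-(t/2)) * (‖ξ‖^s * Lsig σ t ξ)),
    abs_of_nonneg (by positivity : (0:ℝ) ≤ 6 * (‖ξ‖^s * Real.exp (-t * ‖ξ‖^σ)))]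
  rw [hLs]
  calc Real.exp (-(t/2)) * (‖ξ‖^s *
        (Real.sinh (t * Real.sqrt (1/4 - ‖ξ‖^σ)) / Real.sqrt (1/4 - ‖ξ‖^σ)))
      = ‖ξ‖^s * (Real.exp (-(t/2)) *
        (Real.sinh (t * Real.sqrt (1/4 - ‖ξ‖^σ)) / Real.sqrt (1/4 - ‖ξ‖^σ))) := by ring
    _ ≤ ‖ξ‖^s * (6 * Real.exp (-(t * ‖ξ‖^σ))) := mul_le_mul_of_nonneg_left key ha
    _ = 6 * (‖ξ‖^s * Real.exp (-t * ‖ξ‖^σ)) := by rw [neg_mul]; ring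

/-- Scaling identity for the heat multiplier `L^q` norm. -/
lemma step3 (n : ℕ) {σ : ℝ} (hσ : 0 < σ) {s : ℝ} (hs : 0 ≤ s) {q : ℝ} (hq : 1 ≤ q)
    {t : ℝ} (ht : 0 < t) :
    eLpNorm (fun ξ : Rn n => ‖ξ‖ ^ s * Real.exp (-t * ‖ξ‖ ^ σ)) (ENNReal.ofReal q) volume
      = ENNReal.ofReal (t ^ (-(s/σ) - n/(σ*q))) *
        eLpNorm (fun ξ : Rn n => ‖ξ‖ ^ s * Real.exp (-‖ξ‖ ^ σ)) (ENNReal.ofReal q) volume := by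
  have hq0 : 0 < q := lt_of_lt_of_le one_pos hq
  have hp0 : (ENNReal.ofReal q) ≠ 0 := by
    simp [ENNReal.ofReal_eq_zero, not_le, hq0]
  have hptop : (ENNReal.ofReal q) ≠ ⊤ := ENNReal.ofReal_ne_top
  have hpq : (ENNReal.ofReal q).toReal = q := ENNReal.toReal_ofReal hq0.le
  set c : ℝ := t ^ (1/σ) with hc
  have hcpos : 0 < c := Real.rpow_pos_of_pos ht (1/σ)
  set H : Rn n → ℝ := fun η => ‖η‖ ^ s * Real.exp (-‖η‖ ^ σ) with hH
  have Hcont : Continuous H := by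
    exact (continuous_norm.rpow_const (fun x => Or.inr hs)).mul
      ((continuous_norm.rpow_const (fun x => Or.inr hσ.le)).neg.rexp)
  -- pointwise identity
  have hfun : (fun ξ : Rn n => ‖ξ‖ ^ s * Real.exp (-t * ‖ξ‖ ^ σ))
      = fun ξ : Rn n => t ^ (-(s/σ)) * H (c • ξ) := by
    funext ξ
    have hnc : ‖c • ξ‖ = c * ‖ξ‖ := by
      rw [norm_smul, Real.norm_eq_abs, abs_of_pos hcpos]
    have h1 : (c * ‖ξ‖) ^ s = t ^ (s/σ) * ‖ξ‖ ^ s := by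
      rw [Real.mul_rpow hcpos.le (norm_nonneg _), hc, ← Real.rpow_mul ht.le]
      ring_nf
    have h2 : (c * ‖ξ‖) ^ σ = t * ‖ξ‖ ^ σ := by
      rw [Real.mul_rpow hcpos.le (norm_nonneg _), hc, ← Real.rpow_mul ht.le,
        one_div, inv_mul_cancel₀ hσ.ne', Real.rpow_one]
    have h3 : t ^ (-(s/σ)) * t ^ (s/σ) = 1 := by
      rw [← Real.rpow_add ht, neg_add_cancel, Real.rpow_zero]
    simp only [hH, hnc, h1, h2]
    rw [show -(t * ‖ξ‖ ^ σ) = -t * ‖ξ‖ ^ σ by ring,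
      show t ^ (-(s/σ)) * (t ^ (s/σ) * ‖ξ‖ ^ s * Real.exp (-t * ‖ξ‖ ^ σ))
        = (t ^ (-(s/σ)) * t ^ (s/σ)) * (‖ξ‖ ^ s * Real.exp (-t * ‖ξ‖ ^ σ)) by ring, h3, one_mul]
  rw [hfun, ← ofReal_mul_eLpNorm volume _ (Real.rpow_nonneg ht.le _)]
  -- scaling of the eLpNorm of H ∘ (c • ·)
  have hmeas : Measurable fun η : Rn n => ((‖H η‖₊ : ℝ≥0∞)) ^ q :=
    ENNReal.continuous_rpow_const.measurable.comp Hcont.measurable.enorm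
  have hsm : Measurable fun ξ : Rn n => c • ξ := measurable_const_smul c
  have hmap : Measure.map (fun ξ : Rn n => c • ξ) volume
      = ENNReal.ofReal (abs ((c ^ (Module.finrank ℝ (Rn n)))⁻¹)) • volume :=
    Measure.map_addHaar_smul volume hcpos.ne'
  have hint : ∫⁻ ξ : Rn n, ((‖H (c • ξ)‖₊ : ℝ≥0∞)) ^ q ∂volume
      = ENNReal.ofReal ((c ^ n)⁻¹) * ∫⁻ η : Rn n, ((‖H η‖₊ : ℝ≥0∞)) ^ q ∂volume := by
    rw [← lintegral_map hmeas hsm, hmap, lintegral_smul_measure,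
      finrank_euclideanSpace_fin, abs_of_pos (by positivity), smul_eq_mul]
  have hscal : eLpNorm (fun ξ : Rn n => H (c • ξ)) (ENNReal.ofReal q) volume
      = ENNReal.ofReal (t ^ (-((n:ℝ)/(σ*q)))) * eLpNorm H (ENNReal.ofReal q) volume := by
    rw [eLpNorm_eq_lintegral_rpow_enorm_toReal hp0 hptop,
      eLpNorm_eq_lintegral_rpow_enorm_toReal hp0 hptop]
    simp only [enorm_eq_nnnorm]
    rw [hpq, hint,
      ENNReal.mul_rpow_of_nonneg _ _ (by positivity : (0:ℝ) ≤ 1/q),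
      ENNReal.ofReal_rpow_of_pos (by positivity)]
    congr 2
    rw [hc, ← Real.rpow_natCast (t ^ (1/σ)) n, ← Real.rpow_mul ht.le,
      ← Real.rpow_neg_one (t ^ (1/σ * n)), ← Real.rpow_mul ht.le (1/σ * n) (-1),
      ← Real.rpow_mul ht.le]
    congr 1
    field_simp
  rw [hscal, ← mul_assoc, ← ENNReal.ofReal_mul (Real.rpow_nonneg ht.le _),
    ← Real.rpow_add ht, show -(s/σ) + -((n:ℝ)/(σ*q)) = -(s/σ) - (n:ℝ)/(σ*q) by ring]

/-- Estimate (3.9): `e^{-t/2} ‖|ξ|^s L_σ(t,ξ)‖_{L^q(|ξ|<2^{-2/σ})}` is dominated by the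
corresponding norm of the heat multiplier, with the stated decay for `t ≤ 1` and `t ≥ 1`. -/
theorem low_frequency_multiplier_Lq_estimate
    (n : ℕ) (σ : ℝ) (hσ : 0 < σ) (s : ℝ) (hs : 0 ≤ s) (q : ℝ) (hq : 1 ≤ q) :
    ∃ C : ℝ, 0 < C ∧ ∀ t : ℝ, 0 < t →
      (ENNReal.ofReal (Real.exp (-(t/2))) *
          eLpNorm (fun ξ : Rn n => ‖ξ‖ ^ s * Lsig σ t ξ) (ENNReal.ofReal q)
            (volume.restrict (lowFreq n σ)) ≤
        ENNReal.ofReal C *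
          eLpNorm (fun ξ : Rn n => ‖ξ‖ ^ s * Real.exp (-t * ‖ξ‖ ^ σ)) (ENNReal.ofReal q)
            (volume.restrict (lowFreq n σ))) ∧
      (t ≤ 1 →
        ENNReal.ofReal (Real.exp (-(t/2))) *
            eLpNorm (fun ξ : Rn n => ‖ξ‖ ^ s * Lsig σ t ξ) (ENNReal.ofReal q)
              (volume.restrict (lowFreq n σ)) ≤
          ENNReal.ofReal C *
            eLpNorm (fun ξ : Rn n => ‖ξ‖ ^ s) (ENNReal.ofReal q)
              (volume.restrict (lowFreq n σ))) ∧
      (1 ≤ t →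
        ENNReal.ofReal (Real.exp (-(t/2))) *
            eLpNorm (fun ξ : Rn n => ‖ξ‖ ^ s * Lsig σ t ξ) (ENNReal.ofReal q)
              (volume.restrict (lowFreq n σ)) ≤
          ENNReal.ofReal (C * t ^ (-(s/σ) - n/(σ*q))) *
            eLpNorm (fun ξ : Rn n => ‖ξ‖ ^ s * Real.exp (-‖ξ‖ ^ σ)) (ENNReal.ofReal q)
              volume) := by
  refine ⟨6, by norm_num, fun t ht => ?_⟩
  have h1 := step1 n hσ s (ENNReal.ofReal q) ht
  refine ⟨h1, fun _ => ?_, fun ht1 => ?_⟩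
  · -- t ≤ 1 part: e^{-t|ξ|^σ} ≤ 1
    refine le_trans h1 (mul_le_mul_right (eLpNorm_mono fun ξ => ?_) _)
    have ha : (0:ℝ) ≤ ‖ξ‖ ^ s := Real.rpow_nonneg (norm_nonneg ξ) s
    have hr0 : 0 ≤ ‖ξ‖ ^ σ := Real.rpow_nonneg (norm_nonneg ξ) σ
    have he : Real.exp (-t * ‖ξ‖ ^ σ) ≤ 1 := by
      rw [Real.exp_le_one_iff]
      nlinarith
    rw [Real.norm_eq_abs, Real.norm_eq_abs, abs_of_nonneg (by positivity), abs_of_nonneg ha]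
    exact mul_le_of_le_one_right ha he
  · -- t ≥ 1 part: enlarge region and rescale
    calc ENNReal.ofReal (Real.exp (-(t/2))) *
          eLpNorm (fun ξ : Rn n => ‖ξ‖ ^ s * Lsig σ t ξ) (ENNReal.ofReal q)
            (volume.restrict (lowFreq n σ))
        ≤ ENNReal.ofReal 6 *
          eLpNorm (fun ξ : Rn n => ‖ξ‖ ^ s * Real.exp (-t * ‖ξ‖ ^ σ)) (ENNReal.ofReal q)
            (volume.restrict (lowFreq n σ)) := h1
      _ ≤ ENNReal.ofReal 6 *
          eLpNorm (fun ξ : Rn n => ‖ξ‖ ^ s * Real.exp (-t * ‖ξ‖ ^ σ)) (ENNReal.ofReal q)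
            volume :=
        mul_le_mul_right (eLpNorm_mono_measure _ Measure.restrict_le_self) _
      _ = ENNReal.ofReal (6 * t ^ (-(s/σ) - n/(σ*q))) *
          eLpNorm (fun ξ : Rn n => ‖ξ‖ ^ s * Real.exp (-‖ξ‖ ^ σ)) (ENNReal.ofReal q)
            volume := by
        rw [step3 n hσ hs hq ht, ← mul_assoc,
          ← ENNReal.ofReal_mul (by norm_num : (0:ℝ) ≤ 6)]

end
end

section
/- For every integer k ≥ 0, the identity d^k/dϑ^k ( sinh(t√ϑ)/(t√ϑ) ) = 2^{−k} t^{2k} ∫_{θ ∈ [0,1]^{k+1}} ( ∏_{j=0}^{k} θ_j^{2(k−j)} ) cosh( t√ϑ ∏_{j=0}^{k} θ_j ) dθ holds for all ϑ ≥ 0 and t > 0 (with sinh(t√ϑ)/(t√ϑ) understood as its continuous extension, equal to 1, at ϑ = 0); consequently, for every ϑ ≥ 0, 0 < t < 1, and integer k ≥ 0, the estimate | d^k/dϑ^k ( sinh(t√ϑ)/(t√ϑ) ) | ≤ 2^{1−k} e^{t√ϑ} holds. -/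
open MeasureTheory Real Filter
open scoped ENNReal

noncomputable section

def sinhc (t : ℝ) (ϑ : ℝ) : ℝ :=
  if ϑ = 0 then 1 else Real.sinh (t * Real.sqrt ϑ) / (t * Real.sqrt ϑ)

/-- `sinh x / x`, extended by 1 at 0. -/
def gg (x : ℝ) : ℝ := if x = 0 then 1 else Real.sinh x / x

lemma gg_eq_integral (x : ℝ) : gg x = ∫ s in Set.Icc (0:ℝ) 1, Real.cosh (x * s) := by
  rw [gg]
  rw [Measure.restrict_congr_set Ioc_ae_eq_Icc.symm,
    ← intervalIntegral.integral_of_le (by norm_num : (0:ℝ) ≤ 1)]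
  split_ifs with h
  · simp [h]
  · have := intervalIntegral.integral_comp_mul_left (a := (0:ℝ)) (b := 1)
      (c := x) (f := fun u => Real.cosh u) ?_
    · simp only [mul_zero, mul_one] at this
      have : ∫ s in (0:ℝ)..1, Real.cosh (x * s) = x⁻¹ • ∫ u in (0:ℝ)..x, Real.cosh u := this
      have hF : ∫ u in (0:ℝ)..x, Real.cosh u = Real.sinh x - Real.sinh 0 :=
        intervalIntegral.integral_eq_sub_of_hasDerivAt
          (fun u _ => Real.hasDerivAt_sinh u)
          (Real.continuous_cosh.intervalIntegrable 0 x)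
      rw [this, hF]
      simp [div_eq_inv_mul]
    · exact h

lemma abs_gg_le (x : ℝ) : |gg x| ≤ Real.cosh x := by
  rw [gg_eq_integral]
  have h1 : ‖∫ s in Set.Icc (0:ℝ) 1, Real.cosh (x * s)‖ ≤
      Real.cosh x * (volume (Set.Icc (0:ℝ) 1)).toReal := by
    refine norm_setIntegral_le_of_norm_le_const (C := Real.cosh x) ?_ (fun s hs => ?_)
    · rw [Real.volume_Icc]; exact ENNReal.ofReal_lt_top
    · rw [Real.norm_eq_abs, abs_of_pos (Real.cosh_pos _), ← Real.cosh_abs x]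
      refine Real.cosh_le_cosh.mpr ?_
      rw [abs_abs, abs_mul]
      calc |x| * |s| ≤ |x| * 1 :=
            mul_le_mul_of_nonneg_left (abs_le.mpr ⟨by linarith [hs.1], hs.2⟩) (abs_nonneg x)
        _ = |x| := mul_one _
  rw [Real.norm_eq_abs] at h1
  calc |∫ s in Set.Icc (0:ℝ) 1, Real.cosh (x * s)| ≤ _ := h1
    _ ≤ Real.cosh x := by simp

lemma sinhc_eq_gg {t : ℝ} (ht : t ≠ 0) {ϑ : ℝ} (hϑ : 0 ≤ ϑ) :
    sinhc t ϑ = gg (t * Real.sqrt ϑ) := by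
  rw [sinhc, gg]
  rcases eq_or_lt_of_le hϑ with h | h
  · simp [← h]
  · have hs : Real.sqrt ϑ ≠ 0 := by positivity
    rw [if_neg h.ne', if_neg (by positivity)]

lemma tendsto_sinh_div : Tendsto (fun y : ℝ => Real.sinh y / y) (nhdsWithin 0 {(0:ℝ)}ᶜ) (nhds 1) := by
  have h := hasDerivAt_iff_tendsto_slope.mp (Real.hasDerivAt_sinh 0)
  rw [Real.cosh_zero] at h
  refine h.congr (fun y => ?_)
  simp [slope_def_field, div_eq_inv_mul]

lemma cosh_sub_one (v : ℝ) : Real.cosh v - 1 = 2 * Real.sinh (v/2) ^ 2 := by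
  have h1 := Real.cosh_two_mul (v/2)
  rw [show 2 * (v/2) = v by ring] at h1
  have h2 := Real.cosh_sq (v/2)
  linarith

lemma hasDerivWithinAt_cosh_sqrt (c : ℝ) {ϑ : ℝ} (hϑ : 0 ≤ ϑ) :
    HasDerivWithinAt (fun x => Real.cosh (c * Real.sqrt x))
      (c^2/2 * gg (c * Real.sqrt ϑ)) (Set.Ici 0) ϑ := by
  rcases eq_or_ne c 0 with rfl | hc
  · simp only [zero_mul, Real.cosh_zero, ne_eq, zero_pow, OfNat.ofNat_ne_zero,
      not_false_eq_true, zero_div, zero_mul]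
    exact (hasDerivWithinAt_const ϑ _ 1)
  rcases eq_or_lt_of_le hϑ with rfl | hpos
  · -- ϑ = 0
    rw [hasDerivWithinAt_iff_tendsto_slope]
    have hset : Set.Ici (0:ℝ) \ {0} = Set.Ioi 0 := by
      ext x; simp [Set.mem_diff, lt_iff_le_and_ne, eq_comm, and_comm]
    rw [hset]
    have hval : c^2/2 * gg (c * Real.sqrt 0) = c^2/2 := by simp [gg]
    rw [hval]
    have hm : Tendsto (fun x : ℝ => c * Real.sqrt x / 2) (nhdsWithin 0 (Set.Ioi 0))
        (nhdsWithin 0 {(0:ℝ)}ᶜ) := by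
      rw [tendsto_nhdsWithin_iff]
      constructor
      · have : Tendsto (fun x : ℝ => c * Real.sqrt x / 2) (nhds 0) (nhds (c * Real.sqrt 0 / 2)) :=
          ((continuous_const.mul Real.continuous_sqrt).div_const 2).tendsto 0
        simpa using this.mono_left nhdsWithin_le_nhds
      · filter_upwards [self_mem_nhdsWithin] with x hx
        have hx0 : (0:ℝ) < x := hx
        have hs : Real.sqrt x ≠ 0 := ne_of_gt (Real.sqrt_pos.mpr hx0)
        simp only [Set.mem_compl_iff, Set.mem_singleton_iff]
        exact div_ne_zero (mul_ne_zero hc hs) two_ne_zero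
    have hcomp : Tendsto (fun x : ℝ => c^2/2 * (Real.sinh (c * Real.sqrt x / 2) / (c * Real.sqrt x / 2))^2)
        (nhdsWithin 0 (Set.Ioi 0)) (nhds (c^2/2)) := by
      have := (tendsto_sinh_div.comp hm).pow 2
      have h2 := this.const_mul (c^2/2)
      simpa using h2
    refine hcomp.congr' ?_
    filter_upwards [self_mem_nhdsWithin] with x hx
    have hx0 : (0:ℝ) < x := hx
    have hsx : Real.sqrt x ≠ 0 := by positivity
    have hsq : Real.sqrt x ^ 2 = x := Real.sq_sqrt hx0.le
    rw [slope_def_field]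
    simp only [Real.cosh_zero, Real.sqrt_zero, mul_zero, sub_zero]
    rw [cosh_sub_one (c * Real.sqrt x)]
    have hy2 : (c * Real.sqrt x / 2)^2 = c^2 * x / 4 := by
      rw [div_pow, mul_pow, hsq]; norm_num
    rw [div_pow, hy2]
    field_simp
    ring
  · -- ϑ > 0
    have hs : Real.sqrt ϑ ≠ 0 := by positivity
    have h1 : HasDerivAt (fun x => c * Real.sqrt x) (c * (1 / (2 * Real.sqrt ϑ))) ϑ :=
      (Real.hasDerivAt_sqrt hpos.ne').const_mul c
    have h2 : HasDerivAt (fun x => Real.cosh (c * Real.sqrt x))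
        (Real.sinh (c * Real.sqrt ϑ) * (c * (1 / (2 * Real.sqrt ϑ)))) ϑ :=
      h1.cosh
    have heq : Real.sinh (c * Real.sqrt ϑ) * (c * (1 / (2 * Real.sqrt ϑ)))
        = c^2/2 * gg (c * Real.sqrt ϑ) := by
      rw [gg, if_neg (by positivity)]
      field_simp
    rw [heq] at h2
    exact h2.hasDerivWithinAt

def PP (k : ℕ) (θ : Fin (k+1) → ℝ) : ℝ := ∏ j, θ j

def ww (k : ℕ) (θ : Fin (k+1) → ℝ) : ℝ := ∏ j : Fin (k+1), θ j ^ (2*(k - (j:ℕ)))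

def box (k : ℕ) : Set (Fin (k+1) → ℝ) := Set.univ.pi fun _ => Set.Icc (0:ℝ) 1

lemma measurableSet_box (k : ℕ) : MeasurableSet (box k) :=
  MeasurableSet.univ_pi fun _ => measurableSet_Icc

lemma isCompact_box (k : ℕ) : IsCompact (box k) :=
  isCompact_univ_pi fun _ => isCompact_Icc

lemma volume_box (k : ℕ) : volume (box k) = 1 := by
  rw [box, volume_pi_pi]
  simp

lemma continuous_ww (k : ℕ) : Continuous (ww k) :=
  continuous_finset_prod _ fun j _ => (continuous_apply j).pow _

lemma continuous_PP (k : ℕ) : Continuous (PP k) :=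
  continuous_finset_prod _ fun j _ => continuous_apply j

lemma PP_mem {k : ℕ} {θ : Fin (k+1) → ℝ} (hθ : θ ∈ box k) :
    PP k θ ∈ Set.Icc (0:ℝ) 1 := by
  have h : ∀ j : Fin (k+1), θ j ∈ Set.Icc (0:ℝ) 1 := fun j => hθ j (Set.mem_univ j)
  constructor
  · exact Finset.prod_nonneg fun j _ => (h j).1
  · exact Finset.prod_le_one (fun j _ => (h j).1) (fun j _ => (h j).2)

lemma ww_mem {k : ℕ} {θ : Fin (k+1) → ℝ} (hθ : θ ∈ box k) :
    ww k θ ∈ Set.Icc (0:ℝ) 1 := by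
  have h : ∀ j : Fin (k+1), θ j ∈ Set.Icc (0:ℝ) 1 := fun j => hθ j (Set.mem_univ j)
  constructor
  · exact Finset.prod_nonneg fun j _ => pow_nonneg (h j).1 _
  · exact Finset.prod_le_one (fun j _ => pow_nonneg (h j).1 _)
      (fun j _ => pow_le_one₀ (h j).1 (h j).2)

def FF (k : ℕ) (t ϑ : ℝ) : ℝ := ∫ θ in box k, ww k θ * Real.cosh (t * Real.sqrt ϑ * PP k θ)

lemma integrableOn_box {k : ℕ} {f : (Fin (k+1) → ℝ) → ℝ} (hf : Continuous f) :
    IntegrableOn f (box k) :=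
  hf.continuousOn.integrableOn_compact (isCompact_box k)

lemma key_deriv (k : ℕ) (t : ℝ) (θ : Fin (k+1) → ℝ) {y : ℝ} (hy : 0 ≤ y) :
    HasDerivWithinAt (fun x => ww k θ * Real.cosh (t * Real.sqrt x * PP k θ))
      (ww k θ * ((t * PP k θ)^2/2 * gg (t * Real.sqrt y * PP k θ))) (Set.Ici 0) y := by
  have h := (hasDerivWithinAt_cosh_sqrt (t * PP k θ) hy).const_mul (ww k θ)
  have e1 : (fun x => ww k θ * Real.cosh (t * PP k θ * Real.sqrt x))
      = fun x => ww k θ * Real.cosh (t * Real.sqrt x * PP k θ) := by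
    funext x; rw [mul_right_comm]
  have e2 : t * PP k θ * Real.sqrt y = t * Real.sqrt y * PP k θ := mul_right_comm _ _ _
  rw [e1, e2] at h
  exact h

lemma bound_f' (k : ℕ) (t : ℝ) {θ : Fin (k+1) → ℝ} (hθ : θ ∈ box k) {y R : ℝ}
    (hy : 0 ≤ y) (hyR : y ≤ R) :
    ‖ww k θ * ((t * PP k θ)^2/2 * gg (t * Real.sqrt y * PP k θ))‖ ≤
      t^2/2 * Real.cosh (t * Real.sqrt R) := by
  have hP := PP_mem hθ
  have hw := ww_mem hθ
  have h1 : |gg (t * Real.sqrt y * PP k θ)| ≤ Real.cosh (t * Real.sqrt R) := by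
    refine le_trans (abs_gg_le _) ?_
    refine Real.cosh_le_cosh.mpr ?_
    rw [abs_mul, abs_mul, abs_mul]
    have hsy : |Real.sqrt y| = Real.sqrt y := abs_of_nonneg (Real.sqrt_nonneg _)
    have hsR : |Real.sqrt R| = Real.sqrt R := abs_of_nonneg (Real.sqrt_nonneg _)
    rw [hsy, hsR]
    have h2 : Real.sqrt y ≤ Real.sqrt R := Real.sqrt_le_sqrt hyR
    have h3 : |PP k θ| ≤ 1 := abs_le.mpr ⟨by linarith [hP.1], hP.2⟩
    calc |t| * Real.sqrt y * |PP k θ| ≤ |t| * Real.sqrt R * 1 := by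
          apply mul_le_mul (mul_le_mul le_rfl h2 (Real.sqrt_nonneg _) (abs_nonneg _)) h3
            (abs_nonneg _) (by positivity)
      _ = |t| * Real.sqrt R := mul_one _
  have hcosh : (0:ℝ) < Real.cosh (t * Real.sqrt R) := Real.cosh_pos _
  rw [Real.norm_eq_abs, abs_mul, abs_mul]
  have h4 : |ww k θ| ≤ 1 := abs_le.mpr ⟨by linarith [hw.1], hw.2⟩
  have h5 : |(t * PP k θ)^2/2| ≤ t^2/2 := by
    rw [abs_div, abs_of_nonneg (sq_nonneg _), mul_pow]
    have : (PP k θ)^2 ≤ 1 := by nlinarith [hP.1, hP.2]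
    rw [abs_two]
    nlinarith [sq_nonneg t]
  calc |ww k θ| * (|(t * PP k θ)^2/2| * |gg (t * Real.sqrt y * PP k θ)|)
      ≤ 1 * (t^2/2 * Real.cosh (t * Real.sqrt R)) := by
        apply mul_le_mul h4 (mul_le_mul h5 h1 (abs_nonneg _) (by positivity)) (by positivity)
          zero_le_one
    _ = t^2/2 * Real.cosh (t * Real.sqrt R) := one_mul _

lemma hasDerivWithinAt_FF (k : ℕ) (t : ℝ) {ϑ : ℝ} (hϑ : 0 ≤ ϑ) :
    HasDerivWithinAt (FF k t)
      (∫ θ in box k, ww k θ * ((t * PP k θ)^2/2 * gg (t * Real.sqrt ϑ * PP k θ)))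
      (Set.Ici 0) ϑ := by
  rw [hasDerivWithinAt_iff_tendsto_slope]
  set l := nhdsWithin ϑ (Set.Ici 0 \ {ϑ}) with hl
  set C := t^2/2 * Real.cosh (t * Real.sqrt (ϑ+1)) with hC
  -- integrability of the integrands
  have hcont : ∀ x : ℝ, Continuous fun θ : Fin (k+1) → ℝ =>
      ww k θ * Real.cosh (t * Real.sqrt x * PP k θ) := fun x =>
    (continuous_ww k).mul (Real.continuous_cosh.comp (continuous_const.mul (continuous_PP k)))
  have hint : ∀ x : ℝ, IntegrableOn (fun θ : Fin (k+1) → ℝ =>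
      ww k θ * Real.cosh (t * Real.sqrt x * PP k θ)) (box k) := fun x =>
    integrableOn_box (hcont x)
  -- the slope of FF equals the integral of the slopes
  have hslope : ∀ x : ℝ, x ≠ ϑ → slope (FF k t) ϑ x =
      ∫ θ in box k, (ww k θ * Real.cosh (t * Real.sqrt x * PP k θ)
        - ww k θ * Real.cosh (t * Real.sqrt ϑ * PP k θ)) / (x - ϑ) := by
    intro x hx
    rw [slope_def_field, FF, FF, ← integral_sub (hint x) (hint ϑ)]
    rw [integral_div]
  have hmain : Tendsto (fun x : ℝ => ∫ θ in box k,
      (ww k θ * Real.cosh (t * Real.sqrt x * PP k θ)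
        - ww k θ * Real.cosh (t * Real.sqrt ϑ * PP k θ)) / (x - ϑ)) l
      (nhds (∫ θ in box k, ww k θ * ((t * PP k θ)^2/2 * gg (t * Real.sqrt ϑ * PP k θ)))) := by
    refine tendsto_integral_filter_of_dominated_convergence (fun _ => C) ?_ ?_ ?_ ?_
    · -- measurability
      filter_upwards with x
      exact (((hcont x).sub (hcont ϑ)).div_const _).aestronglyMeasurable
    · -- bound
      have hev : ∀ᶠ x in l, x ∈ Set.Icc (0:ℝ) (ϑ+1) ∧ x ≠ ϑ := by
        have h1 : ∀ᶠ x in l, x ∈ Set.Ici (0:ℝ) \ {ϑ} := self_mem_nhdsWithin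
        have h2 : ∀ᶠ x in l, |x - ϑ| < 1 := by
          refine eventually_nhdsWithin_of_eventually_nhds ?_
          have hT : Tendsto (fun x : ℝ => |x - ϑ|) (nhds ϑ) (nhds 0) := by
            have hc : Continuous (fun x : ℝ => |x - ϑ|) :=
              (continuous_id.sub continuous_const).abs
            have := hc.tendsto ϑ
            simpa using this
          exact hT.eventually_lt_const one_pos
        filter_upwards [h1, h2] with x hx1 hx2
        refine ⟨⟨hx1.1, ?_⟩, hx1.2⟩
        have := abs_lt.mp hx2
        linarith [this.2]
      filter_upwards [hev] with x hx
      refine (ae_restrict_iff' (measurableSet_box k)).mpr (ae_of_all _ fun θ hθ => ?_)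
      -- MVT bound
      have hder : ∀ y ∈ Set.Icc (0:ℝ) (ϑ+1),
          HasDerivWithinAt (fun x => ww k θ * Real.cosh (t * Real.sqrt x * PP k θ))
            (ww k θ * ((t * PP k θ)^2/2 * gg (t * Real.sqrt y * PP k θ)))
            (Set.Icc (0:ℝ) (ϑ+1)) y := fun y hy =>
        (key_deriv k t θ hy.1).mono (Set.Icc_subset_Ici_self)
      have hbd : ∀ y ∈ Set.Icc (0:ℝ) (ϑ+1),
          ‖ww k θ * ((t * PP k θ)^2/2 * gg (t * Real.sqrt y * PP k θ))‖ ≤ C := fun y hy =>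
        bound_f' k t hθ hy.1 hy.2
      have hϑmem : ϑ ∈ Set.Icc (0:ℝ) (ϑ+1) := ⟨hϑ, by linarith⟩
      have hlip := Convex.norm_image_sub_le_of_norm_hasDerivWithin_le hder hbd
        (convex_Icc _ _) hϑmem hx.1
      rw [Real.norm_eq_abs, abs_div]
      rw [div_le_iff₀ (by
        rw [abs_pos]
        exact sub_ne_zero.mpr hx.2)]
      calc |ww k θ * Real.cosh (t * Real.sqrt x * PP k θ)
            - ww k θ * Real.cosh (t * Real.sqrt ϑ * PP k θ)| ≤ C * ‖x - ϑ‖ := hlip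
        _ = C * |x - ϑ| := by rw [Real.norm_eq_abs]
    · refine integrableOn_const ?_
      rw [volume_box]
      exact ENNReal.one_ne_top
    · -- pointwise convergence
      refine ae_of_all _ fun θ => ?_
      have h := hasDerivWithinAt_iff_tendsto_slope.mp (key_deriv k t θ hϑ)
      refine h.congr fun x => ?_
      rw [slope_def_field]
  refine hmain.congr' ?_
  filter_upwards [self_mem_nhdsWithin] with x hx
  exact (hslope x hx.2).symm

lemma ww_snoc (k : ℕ) (θ : Fin (k+2) → ℝ) :
    ww (k+1) θ = ww k (fun j => θ j.castSucc) * (PP k (fun j => θ j.castSucc))^2 := by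
  rw [ww, Fin.prod_univ_castSucc]
  have hlast : θ (Fin.last (k+1)) ^ (2 * (k + 1 - ((Fin.last (k+1) : Fin (k+2)) : ℕ))) = 1 := by
    simp
  rw [hlast, mul_one]
  rw [ww, PP, ← Finset.prod_pow, ← Finset.prod_mul_distrib]
  refine Finset.prod_congr rfl fun j _ => ?_
  have hj : (j : ℕ) ≤ k := Nat.lt_succ_iff.mp j.isLt
  have hexp : 2 * (k + 1 - ((j.castSucc : Fin (k+2)) : ℕ)) = 2 * (k - (j:ℕ)) + 2 := by
    simp only [Fin.coe_castSucc]
    omega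
  rw [hexp, pow_add]

lemma PP_snoc (k : ℕ) (θ : Fin (k+2) → ℝ) :
    PP (k+1) θ = PP k (fun j => θ j.castSucc) * θ (Fin.last (k+1)) := by
  rw [PP, PP, Fin.prod_univ_castSucc]

lemma FF_succ (k : ℕ) (t ϑ : ℝ) :
    FF (k+1) t ϑ =
      ∫ θ in box k, ww k θ * (PP k θ)^2 * gg (t * Real.sqrt ϑ * PP k θ) := by
  classical
  set e := MeasurableEquiv.piFinSuccAbove (fun _ : Fin (k+2) => ℝ) (Fin.last (k+1)) with he
  have mp : MeasurePreserving e volume volume :=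
    volume_preserving_piFinSuccAbove (fun _ : Fin (k+2) => ℝ) (Fin.last (k+1))
  set G : ℝ × (Fin (k+1) → ℝ) → ℝ := fun p =>
    ww k p.2 * (PP k p.2)^2 * Real.cosh ((t * Real.sqrt ϑ * PP k p.2) * p.1) with hG
  have happ : ∀ θ : Fin (k+2) → ℝ, e θ = (θ (Fin.last (k+1)), fun j => θ j.castSucc) := by
    intro θ
    rw [he]
    ext
    · rfl
    · simp [MeasurableEquiv.piFinSuccAbove, Fin.removeNth, Fin.succAbove_last, Fin.init]
  have hpre : e ⁻¹' ((Set.Icc (0:ℝ) 1) ×ˢ box k) = box (k+1) := by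
    ext θ
    simp only [Set.mem_preimage, happ, Set.mem_prod, box, Set.mem_pi, Set.mem_univ,
      forall_true_left]
    constructor
    · rintro ⟨h1, h2⟩ j
      refine Fin.lastCases ?_ ?_ j
      · exact h1
      · intro i; exact h2 i
    · intro h
      exact ⟨h _, fun i => h _⟩
  have hGe : ∀ θ : Fin (k+2) → ℝ,
      G (e θ) = ww (k+1) θ * Real.cosh (t * Real.sqrt ϑ * PP (k+1) θ) := by
    intro θ
    rw [happ, hG]
    simp only
    rw [ww_snoc, PP_snoc]
    ring_nf
  have step1 : FF (k+1) t ϑ = ∫ p in (Set.Icc (0:ℝ) 1) ×ˢ box k, G p := by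
    rw [FF]
    have h1 : (∫ θ in box (k+1), ww (k+1) θ * Real.cosh (t * Real.sqrt ϑ * PP (k+1) θ))
        = ∫ θ in box (k+1), G (e θ) :=
      setIntegral_congr_fun (measurableSet_box (k+1)) (fun θ _ => (hGe θ).symm)
    rw [h1, ← hpre]
    exact mp.setIntegral_preimage_emb e.measurableEmbedding G _
  -- integrability of G on the product set
  have hGcont : Continuous G := by
    rw [hG]
    refine (((continuous_ww k).comp continuous_snd).mul
      (((continuous_PP k).comp continuous_snd).pow 2)).mul
      (Real.continuous_cosh.comp ?_)
    exact (continuous_const.mul ((continuous_PP k).comp continuous_snd)).mul continuous_fst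
  have hGint : IntegrableOn G ((Set.Icc (0:ℝ) 1) ×ˢ box k) :=
    hGcont.continuousOn.integrableOn_compact (isCompact_Icc.prod (isCompact_box k))
  rw [step1]
  have hGint2 : Integrable G ((volume.restrict (Set.Icc (0:ℝ) 1)).prod
      (volume.restrict (box k))) := by
    rw [Measure.prod_restrict]
    rw [Measure.volume_eq_prod] at hGint
    exact hGint
  rw [Measure.volume_eq_prod, ← Measure.prod_restrict]
  rw [integral_prod _ hGint2]
  -- now swap: we have ∫ s, ∫ θ', G (s, θ'); want ∫ θ' of inner integral over s
  rw [integral_integral_swap (by exact hGint2)]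
  refine setIntegral_congr_fun (measurableSet_box k) (fun θ _ => ?_)
  simp only [hG]
  rw [MeasureTheory.integral_const_mul, gg_eq_integral]

lemma FF_zero_eq (t ϑ : ℝ) (ht : t ≠ 0) (hϑ : 0 ≤ ϑ) : FF 0 t ϑ = sinhc t ϑ := by
  classical
  set e0 := MeasurableEquiv.funUnique (Fin 1) ℝ with he0
  have mp : MeasurePreserving e0 volume volume := volume_preserving_funUnique (Fin 1) ℝ
  have hpre : e0 ⁻¹' (Set.Icc (0:ℝ) 1) = box 0 := by
    ext θ
    simp only [Set.mem_preimage, box, Set.mem_pi, Set.mem_univ, forall_true_left]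
    constructor
    · intro h j
      have : j = (default : Fin 1) := Fin.eq_of_val_eq (by omega)
      rw [this]; exact h
    · intro h; exact h default
  have hGe : ∀ θ : Fin 1 → ℝ, Real.cosh (t * Real.sqrt ϑ * e0 θ)
      = ww 0 θ * Real.cosh (t * Real.sqrt ϑ * PP 0 θ) := by
    intro θ
    have h1 : ww 0 θ = 1 := by simp [ww]
    have h2 : PP 0 θ = θ 0 := by simp [PP]
    have h3 : e0 θ = θ 0 := rfl
    rw [h1, h2, h3, one_mul]
  have step : FF 0 t ϑ = ∫ s in Set.Icc (0:ℝ) 1, Real.cosh (t * Real.sqrt ϑ * s) := by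
    rw [FF, ← mp.setIntegral_preimage_emb e0.measurableEmbedding
      (fun s => Real.cosh (t * Real.sqrt ϑ * s)) (Set.Icc (0:ℝ) 1), hpre]
    exact setIntegral_congr_fun (measurableSet_box 0) (fun θ _ => (hGe θ).symm)
  rw [step, ← gg_eq_integral, sinhc_eq_gg ht hϑ]

lemma main_id (k : ℕ) (t : ℝ) (ht : 0 < t) : ∀ ϑ : ℝ, 0 ≤ ϑ →
    iteratedDerivWithin k (sinhc t) (Set.Ici 0) ϑ
      = (2:ℝ)^(-(k:ℤ)) * t^(2*k) * FF k t ϑ := by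
  induction k with
  | zero =>
    intro ϑ hϑ
    rw [iteratedDerivWithin_zero, FF_zero_eq t ϑ ht.ne' hϑ]
    norm_num
  | succ k ih =>
    intro ϑ hϑ
    have hmem : ϑ ∈ Set.Ici (0:ℝ) := hϑ
    rw [iteratedDerivWithin_succ]
    have hcongr : derivWithin (iteratedDerivWithin k (sinhc t) (Set.Ici 0)) (Set.Ici 0) ϑ
        = derivWithin (fun x => (2:ℝ)^(-(k:ℤ)) * t^(2*k) * FF k t x) (Set.Ici 0) ϑ :=
      derivWithin_congr (fun x hx => ih x hx) (ih ϑ hϑ)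
    rw [hcongr]
    have hD := (hasDerivWithinAt_FF k t hϑ).const_mul ((2:ℝ)^(-(k:ℤ)) * t^(2*k))
    rw [hD.derivWithin ((uniqueDiffOn_Ici (0:ℝ)) ϑ hmem)]
    -- rearrange
    have hFsucc : (∫ θ in box k, ww k θ * ((t * PP k θ)^2/2 * gg (t * Real.sqrt ϑ * PP k θ)))
        = t^2/2 * FF (k+1) t ϑ := by
      rw [FF_succ]
      rw [← MeasureTheory.integral_const_mul]
      refine setIntegral_congr_fun (measurableSet_box k) (fun θ _ => ?_)
      ring
    rw [hFsucc]
    have h2 : (2:ℝ)^(-((k:ℕ)+1:ℕ):ℤ) = (2:ℝ)^(-(k:ℤ)) * 2⁻¹ := by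
      push_cast
      rw [neg_add, zpow_add₀ (two_ne_zero)]
      norm_num
    rw [h2]
    have h3 : t^(2*(k+1)) = t^(2*k) * t^2 := by rw [← pow_add]; ring_nf
    rw [h3]
    ring

lemma abs_FF_le (k : ℕ) (t ϑ : ℝ) : |FF k t ϑ| ≤ Real.cosh (t * Real.sqrt ϑ) := by
  have h : ‖∫ θ in box k, ww k θ * Real.cosh (t * Real.sqrt ϑ * PP k θ)‖ ≤
      Real.cosh (t * Real.sqrt ϑ) * (volume (box k)).toReal := by
    refine norm_setIntegral_le_of_norm_le_const (C := Real.cosh (t * Real.sqrt ϑ)) ?_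
      (fun θ hθ => ?_)
    · rw [volume_box]; exact ENNReal.one_lt_top
    · have hw := ww_mem hθ
      have hP := PP_mem hθ
      rw [Real.norm_eq_abs, abs_mul, abs_of_pos (Real.cosh_pos _)]
      have h1 : |ww k θ| ≤ 1 := abs_le.mpr ⟨by linarith [hw.1], hw.2⟩
      have h2 : Real.cosh (t * Real.sqrt ϑ * PP k θ) ≤ Real.cosh (t * Real.sqrt ϑ) := by
        refine Real.cosh_le_cosh.mpr ?_
        rw [abs_mul]
        calc |t * Real.sqrt ϑ| * |PP k θ| ≤ |t * Real.sqrt ϑ| * 1 :=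
              mul_le_mul_of_nonneg_left (abs_le.mpr ⟨by linarith [hP.1], hP.2⟩) (abs_nonneg _)
          _ = |t * Real.sqrt ϑ| := mul_one _
      calc |ww k θ| * Real.cosh (t * Real.sqrt ϑ * PP k θ)
          ≤ 1 * Real.cosh (t * Real.sqrt ϑ) :=
            mul_le_mul h1 h2 (le_of_lt (Real.cosh_pos _)) zero_le_one
        _ = Real.cosh (t * Real.sqrt ϑ) := one_mul _
  rw [volume_box] at h
  simpa [FF] using h

/-- For every integer `k ≥ 0`, the identity
`d^k/dϑ^k (sinh(t√ϑ)/(t√ϑ)) = 2^{-k} t^{2k} ∫_{θ∈[0,1]^{k+1}} (∏ θ_j^{2(k-j)}) cosh(t√ϑ ∏ θ_j) dθ`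
holds for all `ϑ ≥ 0`, `t > 0` (derivatives taken within `[0,∞)`); consequently for
`ϑ ≥ 0`, `0 < t < 1` the bound `|d^k/dϑ^k (sinh(t√ϑ)/(t√ϑ))| ≤ 2^{1-k} e^{t√ϑ}` holds. -/
theorem sinhc_iteratedDeriv_eq_and_bound (k : ℕ) :
    (∀ (t : ℝ), 0 < t → ∀ (ϑ : ℝ), 0 ≤ ϑ →
      iteratedDerivWithin k (sinhc t) (Set.Ici (0:ℝ)) ϑ =
        (2:ℝ) ^ (-(k:ℤ)) * t ^ (2 * k) *
          ∫ θ : Fin (k + 1) → ℝ in Set.univ.pi (fun _ => Set.Icc (0:ℝ) 1),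
            (∏ j : Fin (k + 1), θ j ^ (2 * (k - (j : ℕ)))) *
              Real.cosh (t * Real.sqrt ϑ * ∏ j : Fin (k + 1), θ j)) ∧
    (∀ (t : ℝ), 0 < t → t < 1 → ∀ (ϑ : ℝ), 0 ≤ ϑ →
      |iteratedDerivWithin k (sinhc t) (Set.Ici (0:ℝ)) ϑ| ≤
        (2:ℝ) ^ ((1:ℤ) - (k:ℤ)) * Real.exp (t * Real.sqrt ϑ)) := by
  constructor
  · intro t ht ϑ hϑ
    exact main_id k t ht ϑ hϑ
  · intro t ht ht1 ϑ hϑ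
    rw [main_id k t ht ϑ hϑ]
    have h2pos : (0:ℝ) < (2:ℝ)^(-(k:ℤ)) := zpow_pos (by norm_num) _
    have htk : t^(2*k) ≤ 1 := pow_le_one₀ ht.le ht1.le
    have hx : 0 ≤ t * Real.sqrt ϑ := by positivity
    have hce : Real.cosh (t * Real.sqrt ϑ) ≤ Real.exp (t * Real.sqrt ϑ) := by
      rw [Real.cosh_eq]
      have : Real.exp (-(t * Real.sqrt ϑ)) ≤ Real.exp (t * Real.sqrt ϑ) :=
        Real.exp_le_exp.mpr (by linarith)
      linarith
    have hFF : |FF k t ϑ| ≤ Real.exp (t * Real.sqrt ϑ) := (abs_FF_le k t ϑ).trans hce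
    rw [abs_mul, abs_mul]
    have e1 : |(2:ℝ)^(-(k:ℤ))| = (2:ℝ)^(-(k:ℤ)) := abs_of_pos h2pos
    have e2 : |t^(2*k)| = t^(2*k) := abs_of_pos (pow_pos ht _)
    rw [e1, e2]
    have h21 : (2:ℝ)^((1:ℤ)-(k:ℤ)) = 2 * (2:ℝ)^(-(k:ℤ)) := by
      rw [sub_eq_add_neg, zpow_add₀ (two_ne_zero)]
      norm_num
    rw [h21]
    have hexp : (0:ℝ) < Real.exp (t * Real.sqrt ϑ) := Real.exp_pos _
    calc (2:ℝ)^(-(k:ℤ)) * t^(2*k) * |FF k t ϑ|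
        ≤ (2:ℝ)^(-(k:ℤ)) * 1 * Real.exp (t * Real.sqrt ϑ) := by
          refine mul_le_mul (mul_le_mul le_rfl htk (by positivity) h2pos.le) hFF
            (abs_nonneg _) (by positivity)
      _ ≤ 2 * (2:ℝ)^(-(k:ℤ)) * Real.exp (t * Real.sqrt ϑ) := by
          rw [mul_one]
          nlinarith
end
end
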